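/- Let (V,w) be a weighted graph with |V| = n ≥ 2, let W denote the total weight Σ over unordered pairs {i,j} of distinct vertices of w(i,j), and let c ≥ 0 be a real number. If T is a hierarchical clustering tree on V with cost(T) ≤ 2W + c·rev(T), then (1+c)·rev(T) ≥ (n−2)·W; consequently rev(T) ≥ (1/(1+c))·rev(T') for every hierarchical clustering tree T' on V. -/

import Mathlib

open Finset

/-- A hierarchical clustering tree: a rooted binary tree with leaves labelled by vertices. -/
inductive HC (V : Type*) where
  | leaf : V → HC V
  | node : HC V → HC V → HC V

namespace HC

variable {V : Type*}

/-- The list of leaf labels of a tree, left to right. -/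
def leafList : HC V → List V
  | .leaf v => [v]
  | .node l r => leafList l ++ leafList r

/-- The set of leaf labels of a tree. -/
def leaves [DecidableEq V] (t : HC V) : Finset V :=
  t.leafList.toFinset

/-- `t.cluster i j` is the leaf set of the subtree of `t` rooted at the least common
ancestor of the leaves `i` and `j` (i.e. `leaves(T[i ∨ j])`). -/
def cluster [DecidableEq V] : HC V → V → V → Finset V
  | .leaf v, _, _ => {v}
  | .node l r, i, j =>
    if i ∈ l.leaves ∧ j ∈ l.leaves then l.cluster i j
    else if i ∈ r.leaves ∧ j ∈ r.leaves then r.cluster i j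
    else (HC.node l r).leaves

/-- `t` is a hierarchical clustering tree on the whole vertex type `V`:
its leaves are in bijection with `V`. -/
def IsTreeOn [Fintype V] [DecidableEq V] (t : HC V) : Prop :=
  t.leafList.Nodup ∧ t.leaves = Finset.univ

/-- Sum of `f A B` over all internal nodes of the tree, where `A`, `B` are the
leaf sets of the two children of the internal node. -/
def internalSum [DecidableEq V] (f : Finset V → Finset V → ℝ) : HC V → ℝ
  | .leaf _ => 0
  | .node l r => f l.leaves r.leaves + internalSum f l + internalSum f r

/-- The list of all subtrees of a tree. -/
def subtreesList : HC V → List (HC V)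
  | .leaf v => [.leaf v]
  | .node l r => .node l r :: (subtreesList l ++ subtreesList r)

/-- Dasgupta's cost: sum over unordered pairs `{i,j}` of distinct vertices of
`w i j * |leaves(T[i ∨ j])|`. -/
noncomputable def cost [Fintype V] [DecidableEq V] (w : V → V → ℝ) (t : HC V) : ℝ :=
  (1 / 2) * ∑ p ∈ Finset.univ.offDiag, w p.1 p.2 * ((t.cluster p.1 p.2).card : ℝ)

/-- Moseley–Wang revenue: sum over unordered pairs `{i,j}` of distinct vertices of
`w i j * |nonleaves(T[i ∨ j])|`. -/
noncomputable def rev [Fintype V] [DecidableEq V] (w : V → V → ℝ) (t : HC V) : ℝ :=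
  (1 / 2) * ∑ p ∈ Finset.univ.offDiag,
    w p.1 p.2 * ((Finset.univ \ t.cluster p.1 p.2).card : ℝ)

/-- Cohen-Addad et al.'s value: the same formula as cost, used for dissimilarity weights. -/
noncomputable def val [Fintype V] [DecidableEq V] (w : V → V → ℝ) (t : HC V) : ℝ :=
  cost w t

end HC

/-- The total weight `W`: the sum of `w i j` over unordered pairs of distinct vertices. -/
noncomputable def totalWeight {V : Type*} [Fintype V] [DecidableEq V] (w : V → V → ℝ) : ℝ :=
  (1 / 2) * ∑ p ∈ Finset.univ.offDiag, w p.1 p.2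

/-- The merge cost of merging disjoint clusters `A` and `B`. -/
noncomputable def mergeCost {V : Type*} [Fintype V] [DecidableEq V] (w : V → V → ℝ) (A B : Finset V) : ℝ :=
  (B.card : ℝ) * ∑ a ∈ A, ∑ c ∈ Finset.univ \ (A ∪ B), w a c
    + (A.card : ℝ) * ∑ b ∈ B, ∑ c ∈ Finset.univ \ (A ∪ B), w b c

/-- The merge revenue of merging disjoint clusters `A` and `B`. -/
noncomputable def mergeRev {V : Type*} [Fintype V] (w : V → V → ℝ) (A B : Finset V) : ℝ :=
  ((Fintype.card V : ℝ) - (A.card : ℝ) - (B.card : ℝ)) * ∑ a ∈ A, ∑ b ∈ B, w a b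

/-- The average linkage between disjoint nonempty clusters `A` and `B`. -/
noncomputable def avgLinkage {V : Type*} (w : V → V → ℝ) (A B : Finset V) : ℝ :=
  (1 / ((A.card : ℝ) * (B.card : ℝ))) * ∑ a ∈ A, ∑ b ∈ B, w a b

/-- A matching encoded as an involution `f : V → V`: the matched pairs are the pairs
`{v, f v}` with `f v ≠ v`; its weight is the sum of weights of matched pairs. -/
noncomputable def matchingWeight {V : Type*} [Fintype V] [DecidableEq V] (w : V → V → ℝ) (f : V → V) : ℝ :=
  (1 / 2) * ∑ v ∈ Finset.univ.filter (fun v => f v ≠ v), w v (f v)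

/-- A perfect matching encoded as a fixed-point-free involution. -/
def IsPerfectMatching {V : Type*} (f : V → V) : Prop :=
  (∀ v, f (f v) = v) ∧ ∀ v, f v ≠ v



lemma mem_cluster {V : Type*} [DecidableEq V] (t : HC V) (i j : V)
    (hi : i ∈ t.leaves) (hj : j ∈ t.leaves) :
    i ∈ t.cluster i j ∧ j ∈ t.cluster i j := by
  induction t with
  | leaf v =>
      simp only [HC.leaves, HC.leafList, List.toFinset_cons, List.toFinset_nil,
        insert_empty_eq, Finset.mem_singleton] at hi hj
      subst hi; subst hj
      simp [HC.cluster]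
  | node l r ihl ihr =>
      simp only [HC.cluster]
      split_ifs with h1 h2
      · exact ihl h1.1 h1.2
      · exact ihr h2.1 h2.2
      · exact ⟨hi, hj⟩

lemma two_le_cluster_card {V : Type*} [Fintype V] [DecidableEq V] (t : HC V)
    (ht : t.IsTreeOn) (i j : V) (hij : i ≠ j) :
    2 ≤ (t.cluster i j).card := by
  have h := mem_cluster t i j (by simp [ht.2]) (by simp [ht.2])
  have : ({i, j} : Finset V) ⊆ t.cluster i j := by
    intro x hx
    rcases Finset.mem_insert.mp hx with rfl | hx
    · exact h.1
    · rw [Finset.mem_singleton] at hx; subst hx; exact h.2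
  calc 2 = ({i, j} : Finset V).card := by rw [Finset.card_insert_of_notMem (by simpa), Finset.card_singleton]
    _ ≤ _ := Finset.card_le_card this

lemma cost_add_rev {V : Type*} [Fintype V] [DecidableEq V] (w : V → V → ℝ) (t : HC V) :
    HC.cost w t + HC.rev w t = (Fintype.card V : ℝ) * totalWeight w := by
  unfold HC.cost HC.rev totalWeight
  rw [← mul_add, ← Finset.sum_add_distrib, Finset.mul_sum, mul_comm ((Fintype.card V : ℝ)),
    mul_assoc, Finset.sum_mul, Finset.mul_sum]
  refine Finset.sum_congr rfl fun p _ => ?_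
  have hsub := Finset.card_le_card (Finset.subset_univ (t.cluster p.1 p.2))
  rw [Finset.card_sdiff_of_subset (Finset.subset_univ _), Finset.card_univ] at *
  rw [Nat.cast_sub hsub]
  ring

lemma two_totalWeight_le_cost {V : Type*} [Fintype V] [DecidableEq V]
    (w : V → V → ℝ) (hnonneg : ∀ i j, 0 ≤ w i j) (t : HC V) (ht : t.IsTreeOn) :
    2 * totalWeight w ≤ HC.cost w t := by
  unfold HC.cost totalWeight
  rw [mul_comm, mul_assoc, Finset.sum_mul]
  apply mul_le_mul_of_nonneg_left _ (by norm_num)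
  refine Finset.sum_le_sum fun p hp => ?_
  have hij : p.1 ≠ p.2 := (Finset.mem_offDiag.mp hp).2.2
  have h2 := two_le_cluster_card t ht p.1 p.2 hij
  have : (2 : ℝ) ≤ ((t.cluster p.1 p.2).card : ℝ) := by exact_mod_cast h2
  have := mul_le_mul_of_nonneg_left this (hnonneg p.1 p.2)
  linarith

lemma totalWeight_nonneg {V : Type*} [Fintype V] [DecidableEq V]
    (w : V → V → ℝ) (hnonneg : ∀ i j, 0 ≤ w i j) : 0 ≤ totalWeight w := by
  unfold totalWeight
  exact mul_nonneg (by norm_num) (Finset.sum_nonneg fun p _ => hnonneg _ _)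

/-- If `cost(T) ≤ 2W + c·rev(T)` for some `c ≥ 0`, then `(1 + c)·rev(T) ≥ (n − 2)·W`;
consequently `rev(T) ≥ (1/(1 + c))·rev(T')` for every hierarchical clustering tree `T'`. -/
theorem stmt9 {V : Type*} [Fintype V] [DecidableEq V] (n : ℕ)
    (hn : Fintype.card V = n) (hn2 : 2 ≤ n)
    (w : V → V → ℝ) (hsymm : ∀ i j, w i j = w j i) (hnonneg : ∀ i j, 0 ≤ w i j)
    (c : ℝ) (hc : 0 ≤ c)
    (t : HC V) (ht : t.IsTreeOn)
    (hcost : HC.cost w t ≤ 2 * totalWeight w + c * HC.rev w t) :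
    (1 + c) * HC.rev w t ≥ ((n : ℝ) - 2) * totalWeight w ∧
      ∀ t' : HC V, t'.IsTreeOn → HC.rev w t ≥ (1 / (1 + c)) * HC.rev w t' := by
  have hsum := cost_add_rev w t
  rw [hn] at hsum
  have hmain : (1 + c) * HC.rev w t ≥ ((n : ℝ) - 2) * totalWeight w := by nlinarith
  refine ⟨hmain, fun t' ht' => ?_⟩
  have hsum' := cost_add_rev w t'
  rw [hn] at hsum'
  have h2' := two_totalWeight_le_cost w hnonneg t' ht'
  have hrev' : HC.rev w t' ≤ ((n : ℝ) - 2) * totalWeight w := by nlinarith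
  have hpos : (0 : ℝ) < 1 + c := by linarith
  rw [ge_iff_le, div_mul_eq_mul_div, div_le_iff₀ hpos]
  nlinarith
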